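/- For every c ∈ ℝ, the pair x_c(t) = c·|t|^{3/2}, u_c(t) = (31/4)·c·t²·|t|^{3/2} satisfies, for every t ≠ 0, t⁴·x_c''(t) + 4t³·x_c'(t) + t²·x_c(t) = u_c(t); moreover x_c and u_c are continuously differentiable on ℝ with x_c(0) = x_c'(0) = 0 and u_c(0) = u_c'(0) = 0. In particular, the initial data x(0) = 0, x'(0) = 0 at the singular point t = 0 admit a one-parameter family of distinct continuations: x_c ≠ x_{c'} on every interval [0,ε], ε > 0, whenever c ≠ c'. -/

import Mathlib

noncomputable section

open Real

/-- The derivative function of `|s|^(3/2)`. -/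
def Dfun : ℝ → ℝ := fun s => (3/2) * Real.sign s * |s| ^ (1/2 : ℝ)

lemma hasDerivAt_abs32 (t : ℝ) :
    HasDerivAt (fun s : ℝ => |s| ^ (3/2 : ℝ)) (Dfun t) t := by
  rcases lt_trichotomy t 0 with ht | rfl | ht
  · have h1 : HasDerivAt (fun s : ℝ => (-s) ^ (3/2 : ℝ))
        ((3/2 : ℝ) * (-t) ^ (3/2 - 1 : ℝ) * (-1)) t :=
      (Real.hasDerivAt_rpow_const (p := 3/2) (Or.inl (by linarith))).comp t
        (hasDerivAt_neg t)
    have heq : (fun s : ℝ => |s| ^ (3/2 : ℝ)) =ᶠ[nhds t]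
        (fun s : ℝ => (-s) ^ (3/2 : ℝ)) := by
      filter_upwards [Iio_mem_nhds ht] with s hs
      rw [abs_of_neg hs]
    have := h1.congr_of_eventuallyEq heq
    refine this.congr_deriv ?_
    rw [Dfun, Real.sign_of_neg ht, abs_of_neg ht]
    norm_num
  · rw [show Dfun 0 = 0 by simp [Dfun]]
    rw [hasDerivAt_iff_tendsto_slope]
    apply squeeze_zero_norm' (a := fun s => |s| ^ (1/2 : ℝ))
    · filter_upwards [self_mem_nhdsWithin] with s hs
      have hs0 : s ≠ 0 := hs
      have habs : (0:ℝ) < |s| := abs_pos.mpr hs0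
      have key : |s| ^ (3/2 : ℝ) / |s| = |s| ^ (1/2 : ℝ) := by
        have h2 := (Real.rpow_sub habs (3/2) 1).symm
        rw [Real.rpow_one] at h2
        rw [h2]
        norm_num
      rw [slope_def_field]
      simp only [abs_zero, sub_zero, Real.norm_eq_abs]
      rw [Real.zero_rpow (by norm_num), sub_zero, abs_div,
        abs_of_nonneg (Real.rpow_nonneg (abs_nonneg s) _)]
      exact key.le
    · have : Continuous (fun s : ℝ => |s| ^ (1/2 : ℝ)) :=
        (Real.continuous_rpow_const (by norm_num)).comp continuous_abs
      have h0 : Filter.Tendsto (fun s : ℝ => |s| ^ (1/2 : ℝ)) (nhds 0) (nhds 0) := by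
        simpa using this.tendsto 0
      exact h0.mono_left nhdsWithin_le_nhds
  · have h1 : HasDerivAt (fun s : ℝ => s ^ (3/2 : ℝ))
        ((3/2 : ℝ) * t ^ (3/2 - 1 : ℝ)) t :=
      Real.hasDerivAt_rpow_const (Or.inl (by linarith))
    have heq : (fun s : ℝ => |s| ^ (3/2 : ℝ)) =ᶠ[nhds t]
        (fun s : ℝ => s ^ (3/2 : ℝ)) := by
      filter_upwards [Ioi_mem_nhds ht] with s hs
      rw [abs_of_pos hs]
    have := h1.congr_of_eventuallyEq heq
    refine this.congr_deriv ?_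
    rw [Dfun, Real.sign_of_pos ht, abs_of_pos ht]
    norm_num

lemma Dfun_zero : Dfun 0 = 0 := by simp [Dfun]

lemma continuous_Dfun : Continuous Dfun := by
  rw [continuous_iff_continuousAt]
  intro t
  rcases lt_trichotomy t 0 with ht | rfl | ht
  · have hc : ContinuousAt (fun s : ℝ => -((3/2) * (-s) ^ (1/2 : ℝ))) t := by
      apply ContinuousAt.neg
      exact continuousAt_const.mul
        ((Real.continuous_rpow_const (by norm_num)).comp continuous_neg).continuousAt
    apply hc.congr
    filter_upwards [Iio_mem_nhds ht] with s hs
    rw [Dfun, Real.sign_of_neg hs, abs_of_neg hs]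
    ring
  · rw [ContinuousAt, Dfun_zero]
    apply squeeze_zero_norm (a := fun s => (3/2) * |s| ^ (1/2 : ℝ))
    · intro s
      rw [Dfun, Real.norm_eq_abs, abs_mul, abs_mul]
      have h1 : |Real.sign s| ≤ 1 := by
        rcases lt_trichotomy s 0 with h | rfl | h
        · rw [Real.sign_of_neg h]; norm_num
        · simp
        · rw [Real.sign_of_pos h]; norm_num
      have h2 : |(|s| ^ (1/2 : ℝ))| = |s| ^ (1/2 : ℝ) :=
        abs_of_nonneg (Real.rpow_nonneg (abs_nonneg s) _)
      rw [h2]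
      have h3 : |(3/2 : ℝ)| = 3/2 := by norm_num
      rw [h3]
      have h4 : (0:ℝ) ≤ |s| ^ (1/2 : ℝ) := Real.rpow_nonneg (abs_nonneg s) _
      nlinarith [abs_nonneg (Real.sign s)]
    · have hc : Continuous (fun s : ℝ => (3/2) * |s| ^ (1/2 : ℝ)) :=
        continuous_const.mul ((Real.continuous_rpow_const (by norm_num)).comp continuous_abs)
      have := hc.tendsto 0
      simpa using this
  · have hc : ContinuousAt (fun s : ℝ => (3/2) * s ^ (1/2 : ℝ)) t := by
      exact continuousAt_const.mul (Real.continuousAt_rpow_const t _ (Or.inl (ne_of_gt ht)))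
    apply hc.congr
    filter_upwards [Ioi_mem_nhds ht] with s hs
    rw [Dfun, Real.sign_of_pos hs, abs_of_pos hs]
    ring

lemma hasDerivAt_Dfun {t : ℝ} (ht : t ≠ 0) :
    HasDerivAt Dfun ((3/4) * |t| ^ (-(1/2) : ℝ)) t := by
  rcases ht.lt_or_gt with h | h
  · have h1 : HasDerivAt (fun s : ℝ => -((3/2) * (-s) ^ (1/2 : ℝ)))
        (-((3/2) * ((1/2 : ℝ) * (-t) ^ (1/2 - 1 : ℝ) * (-1)))) t := by
      apply HasDerivAt.neg
      exact HasDerivAt.const_mul _ ((Real.hasDerivAt_rpow_const (p := 1/2)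
        (Or.inl (by linarith : -t ≠ 0))).comp t (hasDerivAt_neg t))
    have heq : Dfun =ᶠ[nhds t] (fun s : ℝ => -((3/2) * (-s) ^ (1/2 : ℝ))) := by
      filter_upwards [Iio_mem_nhds h] with s hs
      rw [Dfun, Real.sign_of_neg hs, abs_of_neg hs]
      ring
    have := h1.congr_of_eventuallyEq heq
    refine this.congr_deriv ?_
    rw [abs_of_neg h]
    norm_num
    ring
  · have h1 : HasDerivAt (fun s : ℝ => (3/2) * s ^ (1/2 : ℝ))
        ((3/2) * ((1/2 : ℝ) * t ^ (1/2 - 1 : ℝ))) t :=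
      HasDerivAt.const_mul _ (Real.hasDerivAt_rpow_const (Or.inl (ne_of_gt h)))
    have heq : Dfun =ᶠ[nhds t] (fun s : ℝ => (3/2) * s ^ (1/2 : ℝ)) := by
      filter_upwards [Ioi_mem_nhds h] with s hs
      rw [Dfun, Real.sign_of_pos hs, abs_of_pos hs]
      ring
    have := h1.congr_of_eventuallyEq heq
    refine this.congr_deriv ?_
    rw [abs_of_pos h]
    norm_num
    ring

lemma contDiff_abs32 : ContDiff ℝ 1 (fun s : ℝ => |s| ^ (3/2 : ℝ)) := by
  rw [contDiff_one_iff_deriv]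
  constructor
  · exact fun t => (hasDerivAt_abs32 t).differentiableAt
  · have : deriv (fun s : ℝ => |s| ^ (3/2 : ℝ)) = Dfun :=
      funext fun t => (hasDerivAt_abs32 t).deriv
    rw [this]
    exact continuous_Dfun

lemma deriv_cabs32 (c : ℝ) :
    deriv (fun s : ℝ => c * |s| ^ (3/2 : ℝ)) = fun t => c * Dfun t :=
  funext fun t => (HasDerivAt.const_mul c (hasDerivAt_abs32 t)).deriv


/-- For every `c ∈ ℝ`, the pair `x_c t = c·|t|^{3/2}`,
`u_c t = (31/4)·c·t²·|t|^{3/2}` satisfies `t⁴·x_c'' + 4t³·x_c' + t²·x_c = u_c` for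
`t ≠ 0`; both are `C¹` on `ℝ` with `x_c 0 = x_c' 0 = 0` and `u_c 0 = u_c' 0 = 0`; and
for `c ≠ c'` the continuations `x_c`, `x_{c'}` differ on every interval `[0,ε]`,
`ε > 0`. -/
theorem pendulum_linear_nonunique_continuation :
    (∀ c : ℝ,
      (∀ t : ℝ, t ≠ 0 →
        t ^ 4 * deriv (deriv (fun s : ℝ => c * |s| ^ (3 / 2 : ℝ))) t
          + 4 * t ^ 3 * deriv (fun s : ℝ => c * |s| ^ (3 / 2 : ℝ)) t
          + t ^ 2 * (c * |t| ^ (3 / 2 : ℝ))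
        = 31 / 4 * c * t ^ 2 * |t| ^ (3 / 2 : ℝ)) ∧
      ContDiff ℝ 1 (fun s : ℝ => c * |s| ^ (3 / 2 : ℝ)) ∧
      ContDiff ℝ 1 (fun s : ℝ => 31 / 4 * c * s ^ 2 * |s| ^ (3 / 2 : ℝ)) ∧
      c * |(0 : ℝ)| ^ (3 / 2 : ℝ) = 0 ∧
      deriv (fun s : ℝ => c * |s| ^ (3 / 2 : ℝ)) 0 = 0 ∧
      31 / 4 * c * (0 : ℝ) ^ 2 * |(0 : ℝ)| ^ (3 / 2 : ℝ) = 0 ∧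
      deriv (fun s : ℝ => 31 / 4 * c * s ^ 2 * |s| ^ (3 / 2 : ℝ)) 0 = 0) ∧
    (∀ c c' : ℝ, c ≠ c' → ∀ ε : ℝ, 0 < ε →
      ∃ t ∈ Set.Icc (0 : ℝ) ε, c * |t| ^ (3 / 2 : ℝ) ≠ c' * |t| ^ (3 / 2 : ℝ)) := by
  constructor
  · intro c
    refine ⟨?_, ?_, ?_, ?_, ?_, ?_, ?_⟩
    · intro t ht
      have habs : (0:ℝ) < |t| := abs_pos.mpr ht
      have hderiv1 : deriv (fun s : ℝ => c * |s| ^ (3 / 2 : ℝ)) t = c * Dfun t := by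
        rw [deriv_cabs32]
      have hderiv2 :
          deriv (deriv (fun s : ℝ => c * |s| ^ (3 / 2 : ℝ))) t
            = c * ((3/4) * |t| ^ (-(1/2) : ℝ)) := by
        rw [deriv_cabs32]
        exact (HasDerivAt.const_mul c (hasDerivAt_Dfun ht)).deriv
      rw [hderiv1, hderiv2, Dfun]
      have e1 : |t| ^ (4:ℕ) * |t| ^ (-(1/2) : ℝ) = |t| ^ (7/2 : ℝ) := by
        rw [← Real.rpow_natCast |t| 4, ← Real.rpow_add habs]
        norm_num
      have e2 : |t| ^ (3:ℕ) * |t| ^ ((1/2) : ℝ) = |t| ^ (7/2 : ℝ) := by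
        rw [← Real.rpow_natCast |t| 3, ← Real.rpow_add habs]
        norm_num
      have e3 : |t| ^ (2:ℕ) * |t| ^ ((3/2) : ℝ) = |t| ^ (7/2 : ℝ) := by
        rw [← Real.rpow_natCast |t| 2, ← Real.rpow_add habs]
        norm_num
      have ht4 : t ^ (4:ℕ) = |t| ^ (4:ℕ) := by
        rw [← abs_pow, abs_of_nonneg (by positivity)]
      have ht2 : t ^ (2:ℕ) = |t| ^ (2:ℕ) := by
        rw [← abs_pow, abs_of_nonneg (by positivity)]
      have ht3 : t ^ (3:ℕ) * Real.sign t = |t| ^ (3:ℕ) := by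
        rcases ht.lt_or_gt with h | h
        · rw [Real.sign_of_neg h, abs_of_neg h]; ring
        · rw [Real.sign_of_pos h, abs_of_pos h]; ring
      linear_combination (3/4*c*|t| ^ (-(1/2):ℝ)) * ht4 + (3/4*c) * e1
        + (6*c*|t| ^ ((1/2):ℝ)) * ht3 + 6*c*e2 + (c*|t| ^ ((3/2):ℝ)) * ht2
        + (c - 31/4*c) * e3 + (31/4*c*|t| ^ ((3/2):ℝ)) * ht2 - (31/2*c*|t| ^ ((3/2):ℝ)) * ht2
    · exact contDiff_const.mul contDiff_abs32
    · exact (contDiff_const.mul (contDiff_id.pow 2)).mul contDiff_abs32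
    · simp [Real.zero_rpow]
    · rw [deriv_cabs32]
      simp [Dfun_zero]
    · simp
    · have h1 : HasDerivAt (fun s : ℝ => 31 / 4 * c * s ^ 2)
          (31 / 4 * c * (2 * 0 ^ 1)) (0:ℝ) :=
        HasDerivAt.const_mul _ (hasDerivAt_pow 2 0)
      have h2 : HasDerivAt (fun s : ℝ => |s| ^ (3/2 : ℝ)) 0 (0:ℝ) := by
        have := hasDerivAt_abs32 0
        rwa [Dfun_zero] at this
      have h3 := h1.mul h2
      have h4 : HasDerivAt (fun s : ℝ => 31 / 4 * c * s ^ 2 * |s| ^ (3 / 2 : ℝ)) 0 (0:ℝ) := by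
        exact h3.congr_deriv (by simp)
      exact h4.deriv
  · intro c c' hcc ε hε
    refine ⟨ε, ⟨le_of_lt hε, le_refl ε⟩, ?_⟩
    have habs : (0:ℝ) < |ε| := abs_pos.mpr (ne_of_gt hε)
    have hne : |ε| ^ (3/2 : ℝ) ≠ 0 := ne_of_gt (Real.rpow_pos_of_pos habs _)
    intro h
    exact hcc (mul_right_cancel₀ hne h)
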